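/- Fix 0 < p < 1 and let E : ℕ → ℝ satisfy E(0) = 0 and, for all n ≥ 1, E(n) = 1 + p·E(n−1) + ((1−p)/n)·Σ_{k=1}^{n} E(k−1). Let F : ℕ → ℝ satisfy F(0) = 0 and, for all n ≥ 1, F(n) = 1 + p·F(n−1) + ((1−p)/n)·Σ_{k=1}^{n} (E(n−k) + E(k−1)). Then for all n ≥ 1, F(n) − 2·E(n) = −(1 − p^n)/(1−p). -/

import Mathlib

open Finset

theorem stmt_6 (p : ℝ) (hp0 : 0 < p) (hp1 : p < 1)
    (E F : ℕ → ℝ) (hE0 : E 0 = 0)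
    (hErec : ∀ n : ℕ, 1 ≤ n →
      E n = 1 + p * E (n - 1) + ((1 - p) / (n : ℝ)) * ∑ k ∈ Finset.Icc 1 n, E (k - 1))
    (hF0 : F 0 = 0)
    (hFrec : ∀ n : ℕ, 1 ≤ n →
      F n = 1 + p * F (n - 1) +
        ((1 - p) / (n : ℝ)) * ∑ k ∈ Finset.Icc 1 n, (E (n - k) + E (k - 1))) :
    ∀ n : ℕ, 1 ≤ n → F n - 2 * E n = -(1 - p ^ n) / (1 - p) := by
  have hne : (1 : ℝ) - p ≠ 0 := by linarith
  have hsum : ∀ n : ℕ, ∑ k ∈ Finset.Icc 1 n, E (n - k) = ∑ k ∈ Finset.Icc 1 n, E (k - 1) := by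
    intro n
    exact Finset.sum_nbij' (fun k => n + 1 - k) (fun k => n + 1 - k)
      (by intro a ha; simp [Finset.mem_Icc] at *; omega)
      (by intro a ha; simp [Finset.mem_Icc] at *; omega)
      (by intro a ha; simp [Finset.mem_Icc] at ha; omega)
      (by intro a ha; simp [Finset.mem_Icc] at ha; omega)
      (by intro a ha; simp [Finset.mem_Icc] at ha; congr 1; omega)
  have key : ∀ n : ℕ, 1 ≤ n → F n - 2 * E n = -1 + p * (F (n - 1) - 2 * E (n - 1)) := by
    intro n hn
    rw [hFrec n hn, hErec n hn, Finset.sum_add_distrib, hsum]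
    ring
  intro n hn
  induction n, hn using Nat.le_induction with
  | base =>
    rw [key 1 le_rfl]
    simp [hF0, hE0]
    field_simp
    ring
  | succ n hn ih =>
    have h1 : 1 ≤ n + 1 := by omega
    rw [key (n + 1) h1]
    simp only [Nat.add_sub_cancel]
    rw [ih]
    field_simp
    ring
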